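/- Let α₁, β₁ ∈ ℝ with α₁ β₁ ≠ 0, F₁ = 4 α₁ β₁ (4tα₁² − 4tβ₁² + x), and F₂ = 4α₁⁴ t − 24α₁² t β₁² + 2α₁² x + 4β₁⁴ t − 2β₁² x. Then q(x,t) = −4 α₁ β₁ exp(−i F₂) / ( α₁ cosh(F₁) + i β₁ sinh(F₁) ) satisfies the DNLSII equation i q_t + q_xx + i |q|² q_x = 0. -/

import Mathlib

open Complex

noncomputable def px (q : ℝ → ℝ → ℂ) : ℝ → ℝ → ℂ :=
  fun x t => deriv (fun x' => q x' t) x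

noncomputable def pt (q : ℝ → ℝ → ℂ) : ℝ → ℝ → ℂ :=
  fun x t => deriv (fun t' => q x t') t

noncomputable def qd (α β c s : ℝ) (e : ℂ) (g h : ℝ) : ℂ :=
  (-4 * (α:ℂ) * (β:ℂ) * (e * (-Complex.I * (h:ℂ))) * ((α:ℂ) * (c:ℂ) + Complex.I * (β:ℂ) * (s:ℂ))
    - -4 * (α:ℂ) * (β:ℂ) * e * ((α:ℂ) * ((s * g : ℝ):ℂ) + Complex.I * (β:ℂ) * ((c * g : ℝ):ℂ)))
    / ((α:ℂ) * (c:ℂ) + Complex.I * (β:ℂ) * (s:ℂ))^2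

noncomputable def qdd (α β c s : ℝ) (e : ℂ) (g h : ℝ) : ℂ :=
  -4 * (α:ℂ) * (β:ℂ) * e *
    ((-Complex.I * (h:ℂ)) * ((-Complex.I * (h:ℂ)) * ((α:ℂ) * (c:ℂ) + Complex.I * (β:ℂ) * (s:ℂ))
        - (g:ℂ) * ((α:ℂ) * (s:ℂ) + Complex.I * (β:ℂ) * (c:ℂ)))
        * ((α:ℂ) * (c:ℂ) + Complex.I * (β:ℂ) * (s:ℂ))
      + ((-Complex.I * (h:ℂ)) * (g:ℂ) * ((α:ℂ) * (s:ℂ) + Complex.I * (β:ℂ) * (c:ℂ))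
          - (g:ℂ)^2 * ((α:ℂ) * (c:ℂ) + Complex.I * (β:ℂ) * (s:ℂ)))
        * ((α:ℂ) * (c:ℂ) + Complex.I * (β:ℂ) * (s:ℂ))
      - 2 * (g:ℂ) * ((α:ℂ) * (s:ℂ) + Complex.I * (β:ℂ) * (c:ℂ))
        * ((-Complex.I * (h:ℂ)) * ((α:ℂ) * (c:ℂ) + Complex.I * (β:ℂ) * (s:ℂ))
          - (g:ℂ) * ((α:ℂ) * (s:ℂ) + Complex.I * (β:ℂ) * (c:ℂ))))
    / ((α:ℂ) * (c:ℂ) + Complex.I * (β:ℂ) * (s:ℂ))^3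

lemma Dne (α β : ℝ) (hα : α ≠ 0) (u : ℝ) :
    (α:ℂ) * (Real.cosh u : ℝ) + Complex.I * (β:ℂ) * (Real.sinh u : ℝ) ≠ 0 := by
  intro h
  have h1 := congrArg Complex.re h
  simp [Complex.add_re, Complex.mul_re] at h1
  rcases h1 with h1 | h1
  · exact hα h1
  · exact absurd h1 (ne_of_gt (Real.cosh_pos u))

lemma hasDerivAt_affine (c k x : ℝ) : HasDerivAt (fun y => c + k * y) k x := by
  simpa using ((hasDerivAt_id x).const_mul k).const_add c

lemma hasDerivAt_q (α β : ℝ) (hα : α ≠ 0) (G H : ℝ → ℝ) (g h x : ℝ)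
    (hG : HasDerivAt G g x) (hH : HasDerivAt H h x) :
    HasDerivAt (fun y => (-4 * (α:ℂ) * (β:ℂ) * Complex.exp (-Complex.I * (H y : ℝ)))
        / ((α:ℂ) * (Real.cosh (G y) : ℝ) + Complex.I * (β:ℂ) * (Real.sinh (G y) : ℝ)))
      (qd α β (Real.cosh (G x)) (Real.sinh (G x)) (Complex.exp (-Complex.I * (H x : ℝ))) g h) x := by
  have hE := ((hH.ofReal_comp).const_mul (-Complex.I)).cexp
  have hN := hE.const_mul (-4 * (α:ℂ) * (β:ℂ))
  have hD := ((hG.cosh.ofReal_comp).const_mul (α:ℂ)).add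
    ((hG.sinh.ofReal_comp).const_mul (Complex.I * (β:ℂ)))
  have h' := hN.div hD (Dne α β hα (G x))
  convert h' using 1
  · rfl
  · rfl
  · simp only [qd, Pi.add_apply]

lemma hasDerivAt_qx (α β : ℝ) (hα : α ≠ 0) {G H : ℝ → ℝ} {g h x : ℝ}
    (hG : HasDerivAt G g x) (hH : HasDerivAt H h x) :
    HasDerivAt (fun y => qd α β (Real.cosh (G y)) (Real.sinh (G y))
        (Complex.exp (-Complex.I * (H y : ℝ))) g h)
      (qdd α β (Real.cosh (G x)) (Real.sinh (G x))
        (Complex.exp (-Complex.I * (H x : ℝ))) g h) x := by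
  have hne := Dne α β hα (G x)
  have hE := ((hH.ofReal_comp).const_mul (-Complex.I)).cexp
  have hD := ((hG.cosh.ofReal_comp).const_mul (α:ℂ)).add
    ((hG.sinh.ofReal_comp).const_mul (Complex.I * (β:ℂ)))
  have hQ2 := (((hG.sinh.mul_const g).ofReal_comp).const_mul (α:ℂ)).add
    (((hG.cosh.mul_const g).ofReal_comp).const_mul (Complex.I * (β:ℂ)))
  have hT1 := ((hE.mul_const (-Complex.I * (h:ℂ))).const_mul (-4 * (α:ℂ) * (β:ℂ))).mul hD
  have hT2 := (hE.const_mul (-4 * (α:ℂ) * (β:ℂ))).mul hQ2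
  have hNum := hT1.sub hT2
  have hDen := hD.mul hD
  have h' := hNum.div hDen (mul_ne_zero hne hne)
  simp only [qd, pow_two]
  convert h' using 1
  · rfl
  · rfl
  simp only [qdd, Complex.ofReal_mul, Pi.add_apply, Pi.sub_apply, Pi.mul_apply]
  generalize hC : ((Real.cosh (G x) : ℝ) : ℂ) = C at hne ⊢
  generalize hS : ((Real.sinh (G x) : ℝ) : ℂ) = S at hne ⊢
  field_simp
  ring

lemma split_frac (X Y Z C D SD : ℂ) (hD : D ≠ 0) (hSD : SD ≠ 0) :
    Complex.I * (X / D^2) + Y / D^3 + Complex.I * (C / SD) * (Z / D^2)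
      = (Complex.I * X * D * SD + Y * SD + Complex.I * C * Z * D) / (D^3 * SD) := by
  field_simp

set_option maxHeartbeats 1000000 in
lemma final_algebra (α β : ℝ) (hα : α ≠ 0) (hβ : β ≠ 0) (u : ℝ) (e : ℂ) :
    Complex.I * qd α β (Real.cosh u) (Real.sinh u) e (16*α^3*β - 16*α*β^3)
        (4*α^4 - 24*α^2*β^2 + 4*β^4)
      + qdd α β (Real.cosh u) (Real.sinh u) e (4*α*β) (2*α^2 - 2*β^2)
      + Complex.I * ((16*α^2*β^2 / (α^2*(Real.cosh u)^2 + β^2*(Real.sinh u)^2) : ℝ) : ℂ)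
        * qd α β (Real.cosh u) (Real.sinh u) e (4*α*β) (2*α^2 - 2*β^2) = 0 := by
  have hD := Dne α β hα u
  have hS0 : α^2*(Real.cosh u)^2 + β^2*(Real.sinh u)^2 ≠ 0 := by
    have h1 : 0 < α^2 * (Real.cosh u)^2 := by positivity
    nlinarith [sq_nonneg (β * Real.sinh u)]
  have hSD : ((α:ℂ))^2*((Real.cosh u : ℝ):ℂ)^2 + ((β:ℂ))^2*((Real.sinh u : ℝ):ℂ)^2 ≠ 0 := by
    exact_mod_cast hS0
  have hcs : ((Real.cosh u : ℝ):ℂ)^2 = ((Real.sinh u : ℝ):ℂ)^2 + 1 := by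
    exact_mod_cast Real.cosh_sq u
  simp only [qd, qdd, Complex.ofReal_mul, Complex.ofReal_div, Complex.ofReal_pow,
    Complex.ofReal_add, Complex.ofReal_sub, Complex.ofReal_neg, Complex.ofReal_one,
    Complex.ofReal_ofNat]
  rw [split_frac _ _ _ _ _ _ hD hSD, div_eq_zero_iff]
  left
  linear_combination ((128)*(α:ℂ)^3*(β:ℂ)^7*((Real.sinh u : ℝ):ℂ)^2*e + (128)*(α:ℂ)^5*(β:ℂ)^5*((Real.sinh u : ℝ):ℂ)^2*e + (128)*(α:ℂ)^5*(β:ℂ)^5*((Real.cosh u : ℝ):ℂ)^2*e + (128)*(α:ℂ)^7*(β:ℂ)^3*((Real.cosh u : ℝ):ℂ)^2*e) * hcs + ((128)*(α:ℂ)^3*(β:ℂ)^7*((Real.sinh u : ℝ):ℂ)^2*e + (-128)*(α:ℂ)^3*(β:ℂ)^7*((Real.sinh u : ℝ):ℂ)^2*Complex.I^2*e + (128)*(α:ℂ)^3*(β:ℂ)^7*((Real.sinh u : ℝ):ℂ)^4*e + (-64)*(α:ℂ)^3*(β:ℂ)^7*((Real.sinh u : ℝ):ℂ)^4*Complex.I^2*e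 + (-128)*(α:ℂ)^3*(β:ℂ)^7*((Real.cosh u : ℝ):ℂ)^2*((Real.sinh u : ℝ):ℂ)^2*e + (-128)*(α:ℂ)^4*(β:ℂ)^6*((Real.cosh u : ℝ):ℂ)*((Real.sinh u : ℝ):ℂ)^3*Complex.I*e + (128)*(α:ℂ)^5*(β:ℂ)^5*((Real.sinh u : ℝ):ℂ)^2*e + (128)*(α:ℂ)^5*(β:ℂ)^5*((Real.sinh u : ℝ):ℂ)^2*Complex.I^2*e + (128)*(α:ℂ)^5*(β:ℂ)^5*((Real.cosh u : ℝ):ℂ)^2*e + (64)*(α:ℂ)^5*(β:ℂ)^5*((Real.cosh u : ℝ):ℂ)^2*((Real.sinh u : ℝ):ℂ)^2*e + (-64)*(α:ℂ)^5*(β:ℂ)^5*((Real.cosh u : ℝ):ℂ)^2*((Real.sinh u : ℝ):ℂ)^2*Complex.I^2*e + (-128)*(α:ℂ)^5*(β:ℂ)^5*((Real.cosh u : ℝ):ℂ)^4*e + (256)*(α:ℂ)^6*(β:ℂ)^4*((Real.cosh u : ℝ):ℂ)*((Real.sinh u : ℝ):ℂ)*Complex.I*e + (-128)*(α:ℂ)^6*(β:ℂ)^4*((Real.cosh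 u : ℝ):ℂ)^3*((Real.sinh u : ℝ):ℂ)*Complex.I*e + (128)*(α:ℂ)^7*(β:ℂ)^3*((Real.cosh u : ℝ):ℂ)^2*e + (-64)*(α:ℂ)^7*(β:ℂ)^3*((Real.cosh u : ℝ):ℂ)^4*e) * Complex.I_sq

/-- The single-soliton `q = −4α₁β₁ e^{−iF₂}/(α₁ cosh F₁ + iβ₁ sinh F₁)` solves the
DNLSII equation `i q_t + q_xx + i |q|² q_x = 0`. -/
theorem single_soliton_solves_dnlsII (α₁ β₁ : ℝ) (hαβ : α₁ * β₁ ≠ 0)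
    (F₁ F₂ : ℝ → ℝ → ℝ) (q : ℝ → ℝ → ℂ)
    (hF₁ : ∀ x t, F₁ x t = 4 * α₁ * β₁ * (4 * t * α₁^2 - 4 * t * β₁^2 + x))
    (hF₂ : ∀ x t, F₂ x t = 4 * α₁^4 * t - 24 * α₁^2 * t * β₁^2 + 2 * α₁^2 * x
      + 4 * β₁^4 * t - 2 * β₁^2 * x)
    (hq : ∀ x t, q x t = (-4 * (α₁:ℂ) * (β₁:ℂ) * Complex.exp (-Complex.I * (F₂ x t : ℝ)))
      / ((α₁:ℂ) * (Real.cosh (F₁ x t) : ℝ) + Complex.I * (β₁:ℂ) * (Real.sinh (F₁ x t) : ℝ))) :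
    ∀ x t, Complex.I * pt q x t + px (px q) x t
      + Complex.I * ((‖q x t‖ : ℝ) : ℂ)^2 * px q x t = 0 := by
  have hα : α₁ ≠ 0 := fun h => hαβ (by simp [h])
  have hβ : β₁ ≠ 0 := fun h => hαβ (by simp [h])
  have hG1x : ∀ x t : ℝ, HasDerivAt (fun x' => F₁ x' t) (4*α₁*β₁) x := by
    intro x t
    have he : (fun x' => F₁ x' t)
        = fun x' => (4*α₁*β₁*(4*t*α₁^2 - 4*t*β₁^2)) + (4*α₁*β₁) * x' :=
      funext fun y => by rw [hF₁]; ring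
    rw [he]; exact hasDerivAt_affine _ _ _
  have hG2x : ∀ x t : ℝ, HasDerivAt (fun x' => F₂ x' t) (2*α₁^2 - 2*β₁^2) x := by
    intro x t
    have he : (fun x' => F₂ x' t)
        = fun x' => (4*α₁^4*t - 24*α₁^2*t*β₁^2 + 4*β₁^4*t) + (2*α₁^2 - 2*β₁^2) * x' :=
      funext fun y => by rw [hF₂]; ring
    rw [he]; exact hasDerivAt_affine _ _ _
  have hG1t : ∀ x t : ℝ, HasDerivAt (fun t' => F₁ x t') (16*α₁^3*β₁ - 16*α₁*β₁^3) t := by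
    intro x t
    have he : (fun t' => F₁ x t')
        = fun t' => (4*α₁*β₁*x) + (16*α₁^3*β₁ - 16*α₁*β₁^3) * t' :=
      funext fun y => by rw [hF₁]; ring
    rw [he]; exact hasDerivAt_affine _ _ _
  have hG2t : ∀ x t : ℝ, HasDerivAt (fun t' => F₂ x t')
      (4*α₁^4 - 24*α₁^2*β₁^2 + 4*β₁^4) t := by
    intro x t
    have he : (fun t' => F₂ x t')
        = fun t' => (2*α₁^2*x - 2*β₁^2*x) + (4*α₁^4 - 24*α₁^2*β₁^2 + 4*β₁^4) * t' :=
      funext fun y => by rw [hF₂]; ring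
    rw [he]; exact hasDerivAt_affine _ _ _
  have hqx : ∀ x t : ℝ, px q x t = qd α₁ β₁ (Real.cosh (F₁ x t)) (Real.sinh (F₁ x t))
      (Complex.exp (-Complex.I * (F₂ x t : ℝ))) (4*α₁*β₁) (2*α₁^2 - 2*β₁^2) := by
    intro x t
    have hfun : (fun x' => q x' t)
        = fun x' => (-4 * (α₁:ℂ) * (β₁:ℂ) * Complex.exp (-Complex.I * (F₂ x' t : ℝ)))
          / ((α₁:ℂ) * (Real.cosh (F₁ x' t) : ℝ)
            + Complex.I * (β₁:ℂ) * (Real.sinh (F₁ x' t) : ℝ)) :=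
      funext fun y => hq y t
    show deriv (fun x' => q x' t) x = _
    rw [hfun]
    exact (hasDerivAt_q α₁ β₁ hα _ _ _ _ x (hG1x x t) (hG2x x t)).deriv
  have hqt : ∀ x t : ℝ, pt q x t = qd α₁ β₁ (Real.cosh (F₁ x t)) (Real.sinh (F₁ x t))
      (Complex.exp (-Complex.I * (F₂ x t : ℝ))) (16*α₁^3*β₁ - 16*α₁*β₁^3)
      (4*α₁^4 - 24*α₁^2*β₁^2 + 4*β₁^4) := by
    intro x t
    have hfun : (fun t' => q x t')
        = fun t' => (-4 * (α₁:ℂ) * (β₁:ℂ) * Complex.exp (-Complex.I * (F₂ x t' : ℝ)))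
          / ((α₁:ℂ) * (Real.cosh (F₁ x t') : ℝ)
            + Complex.I * (β₁:ℂ) * (Real.sinh (F₁ x t') : ℝ)) :=
      funext fun y => hq x y
    show deriv (fun t' => q x t') t = _
    rw [hfun]
    exact (hasDerivAt_q α₁ β₁ hα _ _ _ _ t (hG1t x t) (hG2t x t)).deriv
  have hqxx : ∀ x t : ℝ, px (px q) x t = qdd α₁ β₁ (Real.cosh (F₁ x t)) (Real.sinh (F₁ x t))
      (Complex.exp (-Complex.I * (F₂ x t : ℝ))) (4*α₁*β₁) (2*α₁^2 - 2*β₁^2) := by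
    intro x t
    have hfun : (fun x' => px q x' t)
        = fun x' => qd α₁ β₁ (Real.cosh (F₁ x' t)) (Real.sinh (F₁ x' t))
          (Complex.exp (-Complex.I * (F₂ x' t : ℝ))) (4*α₁*β₁) (2*α₁^2 - 2*β₁^2) :=
      funext fun y => hqx y t
    show deriv (fun x' => px q x' t) x = _
    rw [hfun]
    exact (hasDerivAt_qx α₁ β₁ hα (hG1x x t) (hG2x x t)).deriv
  intro x t
  have hw : (((‖q x t‖ : ℝ)) : ℂ)^2
      = ((16*α₁^2*β₁^2 / (α₁^2*(Real.cosh (F₁ x t))^2 + β₁^2*(Real.sinh (F₁ x t))^2) : ℝ) : ℂ) := by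
    have he1 : ‖Complex.exp (-Complex.I * ((F₂ x t : ℝ) : ℂ))‖ = 1 := by
      rw [Complex.norm_exp]; simp
    have h2 : ‖(α₁:ℂ) * (Real.cosh (F₁ x t) : ℝ)
        + Complex.I * (β₁:ℂ) * (Real.sinh (F₁ x t) : ℝ)‖^2
        = α₁^2*(Real.cosh (F₁ x t))^2 + β₁^2*(Real.sinh (F₁ x t))^2 := by
      rw [Complex.sq_norm, Complex.normSq_apply]
      simp only [Complex.add_re, Complex.add_im, Complex.mul_re, Complex.mul_im,
        Complex.I_re, Complex.I_im, Complex.ofReal_re, Complex.ofReal_im]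
      ring
    have hreal : ‖q x t‖^2
        = 16*α₁^2*β₁^2 / (α₁^2*(Real.cosh (F₁ x t))^2 + β₁^2*(Real.sinh (F₁ x t))^2) := by
      rw [hq, norm_div, div_pow, h2]
      congr 1
      rw [norm_mul, norm_mul, norm_mul, he1, mul_one]
      rw [Complex.norm_real, Complex.norm_real]
      rw [show ((-4 : ℂ)) = ((-4 : ℝ) : ℂ) by norm_num, Complex.norm_real]
      rw [mul_pow, mul_pow]
      norm_num [sq_abs]
    exact_mod_cast hreal
  rw [hqt x t, hqxx x t, hqx x t, hw]
  exact final_algebra α₁ β₁ hα hβ (F₁ x t) _
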